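/- Let h = [[a,±a],[∓a,-a]] (i.e. b = ±a) with a ≠ 0, and T = [[cosh t, sinh t],[sinh t, cosh t]]. Then T⁻¹ h T = e^{±2t} h. Consequently every nonzero h with det h = 0 of the form [[a,b],[-b,-a]] is SO⁺(1,1)-conjugate to exactly one of [[1,1],[-1,-1]], [[1,-1],[1,-1]], [[-1,1],[-1,1]], [[-1,-1],[1,1]]. -/
import Mathlib

lemma aux_inv (t : ℝ) :
    (!![Real.cosh t, Real.sinh t; Real.sinh t, Real.cosh t])⁻¹ =
      !![Real.cosh t, -Real.sinh t; -Real.sinh t, Real.cosh t] := by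
  apply Matrix.inv_eq_left_inv
  have h := Real.cosh_sq_sub_sinh_sq t
  ext i j
  fin_cases i <;> fin_cases j <;>
    simp [Matrix.mul_apply, Fin.sum_univ_two] <;> nlinarith [h]

lemma aux1 (a t ε : ℝ) (hε : ε = 1 ∨ ε = -1) :
    (!![Real.cosh t, Real.sinh t; Real.sinh t, Real.cosh t])⁻¹ *
        !![a, ε * a; -(ε * a), -a] *
        !![Real.cosh t, Real.sinh t; Real.sinh t, Real.cosh t] =
      Real.exp (2 * ε * t) • !![a, ε * a; -(ε * a), -a] := by
  rw [aux_inv]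
  rcases hε with rfl | rfl
  · rw [show (2:ℝ) * 1 * t = t * 2 by ring]
    have he : Real.exp (t * 2) =
        (Real.cosh t + Real.sinh t) * (Real.cosh t + Real.sinh t) := by
      rw [Real.cosh_add_sinh, ← Real.exp_add]; ring_nf
    ext i j
    fin_cases i <;> fin_cases j <;>
      simp [Matrix.mul_apply, Fin.sum_univ_two] <;>
      first
        | linear_combination a * he
        | linear_combination (-a) * he
  · rw [show (2:ℝ) * (-1) * t = -(t * 2) by ring]
    have he : Real.exp (-(t * 2)) =
        (Real.cosh t - Real.sinh t) * (Real.cosh t - Real.sinh t) := by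
      rw [Real.cosh_sub_sinh, ← Real.exp_add]; ring_nf
    ext i j
    fin_cases i <;> fin_cases j <;>
      simp [Matrix.mul_apply, Fin.sum_univ_two] <;>
      first
        | linear_combination a * he
        | linear_combination (-a) * he

/-- For `h = [[a, εa],[-εa, -a]]` with `ε = ±1`, conjugation by
`T = [[cosh t, sinh t],[sinh t, cosh t]]` gives `e^{2εt}·h`. Consequently every nonzero
`h = [[a,b],[-b,-a]]` with `det h = 0` (i.e. `b² = a²`, `a ≠ 0`) is `SO⁺(1,1)`-conjugate to
exactly one of the four matrices `[[1,1],[-1,-1]]`, `[[1,-1],[1,-1]]`, `[[-1,1],[-1,1]]`,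
`[[-1,-1],[1,1]]`. -/
theorem det_zero_normal_forms :
    (∀ (a t ε : ℝ), ε = 1 ∨ ε = -1 →
      (!![Real.cosh t, Real.sinh t; Real.sinh t, Real.cosh t])⁻¹ *
          !![a, ε * a; -(ε * a), -a] *
          !![Real.cosh t, Real.sinh t; Real.sinh t, Real.cosh t] =
        Real.exp (2 * ε * t) • !![a, ε * a; -(ε * a), -a]) ∧
    (∀ a b : ℝ, b ^ 2 = a ^ 2 → a ≠ 0 →
      ∃! M : Matrix (Fin 2) (Fin 2) ℝ,
        M ∈ ({!![1, 1; -1, -1], !![1, -1; 1, -1], !![-1, 1; -1, 1], !![-1, -1; 1, 1]} :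
            Set (Matrix (Fin 2) (Fin 2) ℝ)) ∧
        ∃ t : ℝ,
          (!![Real.cosh t, Real.sinh t; Real.sinh t, Real.cosh t])⁻¹ *
              !![a, b; -b, -a] *
              !![Real.cosh t, Real.sinh t; Real.sinh t, Real.cosh t] = M) := by
  constructor
  · exact aux1
  · intro a b hsq ha
    obtain ⟨ε, hε, hba⟩ : ∃ ε : ℝ, (ε = 1 ∨ ε = -1) ∧ b = ε * a := by
      have h1 : (b - a) * (b + a) = 0 := by nlinarith
      rcases mul_eq_zero.mp h1 with h | h
      · exact ⟨1, Or.inl rfl, by linarith⟩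
      · exact ⟨-1, Or.inr rfl, by linarith⟩
    subst hba
    have habs : (0:ℝ) < |a| := abs_pos.mpr ha
    refine ⟨|a|⁻¹ • !![a, ε * a; -(ε * a), -a], ⟨?_, ?_⟩, ?_⟩
    · -- membership
      simp only [Set.mem_insert_iff, Set.mem_singleton_iff]
      rcases hε with rfl | rfl <;> rcases ha.lt_or_gt with h | h
      · -- ε = 1, a < 0 : !![-1,-1;1,1]
        refine Or.inr (Or.inr (Or.inr ?_))
        ext i j
        fin_cases i <;> fin_cases j <;>
          simp [abs_of_neg h] <;> field_simp
      · -- ε = 1, a > 0 : !![1,1;-1,-1]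
        refine Or.inl ?_
        ext i j
        fin_cases i <;> fin_cases j <;>
          simp [abs_of_pos h] <;> field_simp
      · -- ε = -1, a < 0 : !![-1,1;-1,1]
        refine Or.inr (Or.inr (Or.inl ?_))
        ext i j
        fin_cases i <;> fin_cases j <;>
          simp [abs_of_neg h] <;> field_simp
      · -- ε = -1, a > 0 : !![1,-1;1,-1]
        refine Or.inr (Or.inl ?_)
        ext i j
        fin_cases i <;> fin_cases j <;>
          simp [abs_of_pos h] <;> field_simp
    · -- existence of t
      refine ⟨-(ε * Real.log |a|) / 2, ?_⟩
      rw [aux1 a _ ε hε]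
      have hε2 : ε * ε = 1 := by rcases hε with rfl | rfl <;> norm_num
      have h2 : 2 * ε * (-(ε * Real.log |a|) / 2) = -Real.log |a| := by
        linear_combination (-Real.log |a|) * hε2
      rw [h2, Real.exp_neg, Real.exp_log habs]
    · -- uniqueness
      rintro M ⟨hmem, t, hconj⟩
      rw [aux1 a t ε hε] at hconj
      set E := Real.exp (2 * ε * t) with hE
      have hEpos : 0 < E := Real.exp_pos _
      have h00 : M 0 0 = E * a := by
        rw [← hconj]; simp
      have hv : |M 0 0| = 1 := by
        simp only [Set.mem_insert_iff, Set.mem_singleton_iff] at hmem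
        rcases hmem with rfl | rfl | rfl | rfl <;> norm_num
      have hEa : E * |a| = 1 := by
        rw [← abs_of_pos hEpos, ← abs_mul, ← h00, hv]
      have hEinv : E = |a|⁻¹ := by
        field_simp
        linarith [hEa]
      rw [← hconj, hEinv]
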